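/- arXiv:2503.12300 — 2 statements merged into one kernel-verified Lean document; each statement's English description precedes it below -/
import Mathlib

section
/- Let G be a finite group, let p be the smallest prime divisor of |G|, and let A be a subgroup of maximum order among the self-centralizing subgroups of G. If |G : A| = p^2 and p^2 < |G : Z(G)| < p^4, then CD(G) = {Z(G), G}. -/
/-- The Chermak-Delgado measure of a subgroup `H` of `G`: `|H| · |C_G(H)|`. -/
noncomputable def cdMeasure (G : Type*) [Group G] (H : Subgroup G) : ℕ :=
  Nat.card H * Nat.card (Subgroup.centralizer (H : Set G))

/-- The Chermak-Delgado lattice of `G`: the set of subgroups whose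
Chermak-Delgado measure is maximal. -/
def CD (G : Type*) [Group G] : Set (Subgroup G) :=
  {H : Subgroup G | ∀ K : Subgroup G, cdMeasure G K ≤ cdMeasure G H}

namespace CDAux

open Subgroup

set_option linter.unusedSectionVars false
variable {G : Type*} [Group G] [Finite G]

lemma card_pos' (H : Subgroup G) : 0 < Nat.card H := Nat.card_pos

lemma card_mul_relIndex {H K : Subgroup G} (h : H ≤ K) :
    Nat.card H * H.relIndex K = Nat.card K := by
  have h2 := Subgroup.card_mul_index (H.subgroupOf K)
  rwa [Nat.card_congr (subgroupOfEquivOfLe h).toEquiv] at h2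

lemma centralizer_le_normalizer' (B : Subgroup G) :
    centralizer (B : Set G) ≤ normalizer (B : Set G) := by
  intro g hg
  rw [mem_normalizer_iff]
  intro h
  constructor
  · intro hh
    have := hg h hh
    have e : g * h * g⁻¹ = h := by
      rw [← this]; group
    rwa [e]
  · intro hh
    have e : h = g⁻¹ * ((g * h * g⁻¹) * g) := by group
    rw [e, hg _ hh]
    have e2 : g⁻¹ * (g * (g * h * g⁻¹)) = g * h * g⁻¹ := by group
    rw [e2]; exact hh

lemma conj_mem_centralizer {H : Subgroup G} {h x : G} (hh : h ∈ H)
    (hx : x ∈ centralizer (H : Set G)) : h * x * h⁻¹ ∈ centralizer (H : Set G) := by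
  intro g hg
  have hcomm := hx (h⁻¹ * g * h) (H.mul_mem (H.mul_mem (H.inv_mem hh) hg) hh)
  calc g * (h * x * h⁻¹) = h * ((h⁻¹ * g * h) * x) * h⁻¹ := by group
    _ = h * (x * (h⁻¹ * g * h)) * h⁻¹ := by rw [hcomm]
    _ = h * x * h⁻¹ * g := by group

lemma le_normalizer_centralizer' (H : Subgroup G) :
    H ≤ normalizer ((centralizer (H : Set G) : Subgroup G) : Set G) := by
  intro h hh
  rw [mem_normalizer_iff]
  intro x
  constructor
  · intro hx; exact conj_mem_centralizer hh hx
  · intro hx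
    have := conj_mem_centralizer (H.inv_mem hh) hx
    have e : h⁻¹ * (h * x * h⁻¹) * h⁻¹⁻¹ = x := by group
    rwa [e] at this

lemma card_sup_mul_card_inf (H K : Subgroup G) (h : H ≤ (normalizer (K : Set G))) :
    Nat.card (H ⊔ K : Subgroup G) * Nat.card (H ⊓ K : Subgroup G) =
      Nat.card H * Nat.card K := by
  have hK : K ≤ (normalizer (K : Set G)) := le_normalizer
  have e3 : K.relIndex (H ⊔ K) = K.relIndex H := by
    have h2 := relIndex_sup_right (H.subgroupOf (normalizer (K : Set G))) (K.subgroupOf (normalizer (K : Set G)))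
    rw [← subgroupOf_sup h hK, relIndex_subgroupOf (sup_le h hK),
      relIndex_subgroupOf h] at h2
    exact h2
  have e1 : Nat.card K * K.relIndex (H ⊔ K) = Nat.card (H ⊔ K : Subgroup G) :=
    card_mul_relIndex le_sup_right
  have e2 : Nat.card (H ⊓ K : Subgroup G) * K.relIndex H = Nat.card H := by
    have h2 := card_mul_relIndex (inf_le_left : H ⊓ K ≤ H)
    rwa [inf_relIndex_left] at h2
  calc Nat.card (H ⊔ K : Subgroup G) * Nat.card (H ⊓ K : Subgroup G)
      = (Nat.card K * K.relIndex (H ⊔ K)) * Nat.card (H ⊓ K : Subgroup G) := by rw [e1]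
    _ = (Nat.card (H ⊓ K : Subgroup G) * K.relIndex H) * Nat.card K := by rw [e3]; ring
    _ = Nat.card H * Nat.card K := by rw [e2]

lemma centralizer_sup' (H K : Subgroup G) :
    centralizer ((H ⊔ K : Subgroup G) : Set G) =
      centralizer (H : Set G) ⊓ centralizer (K : Set G) := by
  apply le_antisymm
  · exact le_inf (centralizer_le (SetLike.coe_subset_coe.2 le_sup_left))
      (centralizer_le (SetLike.coe_subset_coe.2 le_sup_right))
  · intro x hx
    obtain ⟨hx1, hx2⟩ := mem_inf.1 hx
    rw [mem_centralizer_iff]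
    intro g hg
    have hsup : (H ⊔ K : Subgroup G) ≤ centralizer {x} := by
      apply sup_le
      · intro h hh; exact mem_centralizer_singleton_iff.2 (hx1 h hh)
      · intro h hh; exact mem_centralizer_singleton_iff.2 (hx2 h hh)
    exact mem_centralizer_singleton_iff.1 (hsup hg)

lemma join_abelian {B : Subgroup G} (hB : B ≤ centralizer (B : Set G)) {x : G}
    (hx : x ∈ centralizer (B : Set G)) :
    B ⊔ zpowers x ≤ centralizer ((B ⊔ zpowers x : Subgroup G) : Set G) := by
  rw [centralizer_sup']
  have hxx : x ∈ centralizer ((zpowers x : Subgroup G) : Set G) := by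
    rw [mem_centralizer_iff]
    intro g hg
    obtain ⟨n, rfl⟩ := mem_zpowers_iff.1 hg
    exact ((Commute.refl x).zpow_left n).eq
  refine sup_le (le_inf hB ?_) (le_inf ?_ ?_)
  · rw [le_centralizer_iff]; exact zpowers_le.2 hx
  · exact zpowers_le.2 hx
  · exact zpowers_le.2 hxx

lemma card_lt_of_lt {H K : Subgroup G} (h : H ≤ K) (hne : H ≠ K) :
    Nat.card H < Nat.card K :=
  lt_of_le_of_ne (Subgroup.card_le_of_le h) fun he => hne (eq_of_le_of_card_ge h he.ge)

lemma exists_max_card (S : Set (Subgroup G)) (hne : S.Nonempty) :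
    ∃ B ∈ S, ∀ B' ∈ S, Nat.card B' ≤ Nat.card B := by
  haveI : Finite (Subgroup G) :=
    Finite.of_injective (fun H : Subgroup G => (H : Set G)) SetLike.coe_injective
  haveI : Nonempty S := hne.to_subtype
  obtain ⟨⟨B, hB⟩, hmax⟩ := Finite.exists_max (fun B : S => Nat.card B.1)
  exact ⟨B, hB, fun B' hB' => hmax ⟨B', hB'⟩⟩

lemma p_le_of_dvd {p N n : ℕ} (hpmin : ∀ q : ℕ, q.Prime → q ∣ N → p ≤ q)
    (hn : n ∣ N) (h1 : 1 < n) : p ≤ n :=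
  le_trans (hpmin n.minFac (Nat.minFac_prime (by omega)) (dvd_trans (Nat.minFac_dvd n) hn))
    (Nat.minFac_le (by omega))

lemma propP {p : ℕ} (hp : p.Prime)
    (hpmin : ∀ q : ℕ, q.Prime → q ∣ Nat.card G → p ≤ q)
    {A : Subgroup G}
    (hAmax : ∀ B : Subgroup G, Subgroup.centralizer (B : Set G) = B →
      Nat.card B ≤ Nat.card A)
    (hiA : A.index = p ^ 2)
    (hZ₂ : (Subgroup.center G).index < p ^ 4)
    {H : Subgroup G} (hH : ∀ K, cdMeasure G K ≤ cdMeasure G H) :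
    H ⊓ centralizer (H : Set G) = center G ∧
      ∀ K, cdMeasure G K ≤ cdMeasure G (center G) := by
  set Z := center G with hZdef
  set K := centralizer (H : Set G) with hKdef
  set N := H ⊓ K with hNdef
  set M := centralizer (N : Set G) with hMdef
  have hcZ : centralizer ((Z : Subgroup G) : Set G) = ⊤ :=
    centralizer_eq_top_iff_subset.2 fun x hx => hx
  have cardG_eq : Nat.card Z * Z.index = Nat.card G := Subgroup.card_mul_index Z
  have cardA_eq : Nat.card A * p ^ 2 = Nat.card G := by
    have h2 := Subgroup.card_mul_index A; rwa [hiA] at h2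
  -- Z ≤ H
  have ZleH : Z ≤ H := by
    have hcsup : centralizer ((H ⊔ Z : Subgroup G) : Set G) = K := by
      rw [centralizer_sup', hcZ, inf_top_eq, hKdef]
    have h1 : cdMeasure G (H ⊔ Z) ≤ cdMeasure G H := hH _
    unfold cdMeasure at h1
    rw [hcsup, ← hKdef] at h1
    have h2 : Nat.card (H ⊔ Z : Subgroup G) ≤ Nat.card H :=
      Nat.le_of_mul_le_mul_right h1 (card_pos' K)
    have h3 : H = H ⊔ Z := eq_of_le_of_card_ge le_sup_left h2
    rw [h3]; exact le_sup_right
  have ZleK : Z ≤ K := center_le_centralizer _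
  have ZleN : Z ≤ N := le_inf ZleH ZleK
  have NleH : N ≤ H := inf_le_left
  have NleK : N ≤ K := inf_le_right
  have KleM : K ≤ M := centralizer_le (SetLike.coe_subset_coe.2 NleH)
  have NleM : N ≤ M := NleK.trans KleM
  have HleCK : H ≤ centralizer (K : Set G) := le_centralizer_iff.2 le_rfl
  have hmK : cdMeasure G H ≤ cdMeasure G K := by
    unfold cdMeasure
    rw [← hKdef]
    calc Nat.card H * Nat.card K = Nat.card K * Nat.card H := mul_comm _ _
      _ ≤ Nat.card K * Nat.card (centralizer (K : Set G)) :=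
          Nat.mul_le_mul_left _ (Subgroup.card_le_of_le HleCK)
  have hmN : cdMeasure G H ≤ cdMeasure G N := by
    have hJ : Nat.card (H ⊔ K : Subgroup G) * Nat.card N =
        Nat.card H * Nat.card K := by
      have h2 := card_sup_mul_card_inf H K (by rw [hKdef]; exact le_normalizer_centralizer' H)
      rwa [← hNdef] at h2
    have hL : Nat.card (K ⊔ centralizer (K : Set G) : Subgroup G) *
        Nat.card (K ⊓ centralizer (K : Set G) : Subgroup G) =
        Nat.card K * Nat.card (centralizer (K : Set G)) :=
      card_sup_mul_card_inf K _ (le_normalizer_centralizer' K)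
    have hLle : (K ⊔ centralizer (K : Set G) : Subgroup G) ≤ M :=
      sup_le KleM (by rw [hMdef]; exact centralizer_le (SetLike.coe_subset_coe.2 NleK))
    have hKcK : centralizer ((H ⊔ K : Subgroup G) : Set G) =
        (K ⊓ centralizer (K : Set G) : Subgroup G) := by
      rw [centralizer_sup', ← hKdef]
    have key : cdMeasure G H * cdMeasure G K ≤ cdMeasure G N * cdMeasure G (H ⊔ K) := by
      unfold cdMeasure
      rw [← hKdef, ← hMdef, hKcK]
      calc (Nat.card H * Nat.card K) * (Nat.card K * Nat.card (centralizer (K : Set G)))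
          = (Nat.card (H ⊔ K : Subgroup G) * Nat.card N) *
            (Nat.card (K ⊔ centralizer (K : Set G) : Subgroup G) *
              Nat.card (K ⊓ centralizer (K : Set G) : Subgroup G)) := by rw [hJ, hL]
        _ = (Nat.card N * Nat.card (K ⊔ centralizer (K : Set G) : Subgroup G)) *
            (Nat.card (H ⊔ K : Subgroup G) *
              Nat.card (K ⊓ centralizer (K : Set G) : Subgroup G)) := by ring
        _ ≤ (Nat.card N * Nat.card M) *
            (Nat.card (H ⊔ K : Subgroup G) *
              Nat.card (K ⊓ centralizer (K : Set G) : Subgroup G)) := by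
            exact Nat.mul_le_mul_right _ (Nat.mul_le_mul_left _ (Subgroup.card_le_of_le hLle))
    have hmHK : cdMeasure G (H ⊔ K) ≤ cdMeasure G H := hH _
    have key2 : cdMeasure G H * cdMeasure G H ≤ cdMeasure G N * cdMeasure G H :=
      le_trans (Nat.mul_le_mul_left _ hmK)
        (le_trans key (Nat.mul_le_mul_left _ hmHK))
    have hpos : 0 < cdMeasure G H := by
      unfold cdMeasure; exact Nat.mul_pos (card_pos' _) (card_pos' _)
    exact Nat.le_of_mul_le_mul_right key2 hpos
  have hNmax : ∀ K', cdMeasure G K' ≤ cdMeasure G N := fun K' => (hH K').trans hmN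
  by_cases hMN : M ≤ N
  · exfalso
    have hMeqN : M = N := le_antisymm hMN NleM
    have hNsc : centralizer (N : Set G) = N := by rw [← hMdef, hMeqN]
    have hcard : Nat.card N ≤ Nat.card A := hAmax N hNsc
    have hmtop : cdMeasure G ⊤ ≤ cdMeasure G N := hNmax ⊤
    have htop : cdMeasure G ⊤ = Nat.card G * Nat.card Z := by
      unfold cdMeasure
      rw [Subgroup.card_top, coe_top, Subgroup.centralizer_univ]
    have hmN' : cdMeasure G N = Nat.card N * Nat.card N := by
      unfold cdMeasure; rw [hNsc]
    rw [htop, hmN'] at hmtop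
    have h4 : Nat.card G * Nat.card Z ≤ Nat.card A * Nat.card A :=
      hmtop.trans (Nat.mul_le_mul hcard hcard)
    have h5 : (p ^ 2 * p ^ 2) * (Nat.card G * Nat.card Z) ≤ Nat.card G * Nat.card G := by
      calc (p ^ 2 * p ^ 2) * (Nat.card G * Nat.card Z)
          ≤ (p ^ 2 * p ^ 2) * (Nat.card A * Nat.card A) := Nat.mul_le_mul_left _ h4
        _ = (Nat.card A * p ^ 2) * (Nat.card A * p ^ 2) := by ring
        _ = Nat.card G * Nat.card G := by rw [cardA_eq]
    have h6 : (p ^ 2 * p ^ 2) * Nat.card Z ≤ Nat.card G := by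
      have h7 : Nat.card G * ((p ^ 2 * p ^ 2) * Nat.card Z) ≤ Nat.card G * Nat.card G := by
        calc Nat.card G * ((p ^ 2 * p ^ 2) * Nat.card Z)
            = (p ^ 2 * p ^ 2) * (Nat.card G * Nat.card Z) := by ring
          _ ≤ Nat.card G * Nat.card G := h5
      exact Nat.le_of_mul_le_mul_left h7 Nat.card_pos
    have h8 : Nat.card Z * (p ^ 2 * p ^ 2) ≤ Nat.card Z * Z.index := by
      rw [cardG_eq]
      calc Nat.card Z * (p ^ 2 * p ^ 2) = (p ^ 2 * p ^ 2) * Nat.card Z := mul_comm _ _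
        _ ≤ Nat.card G := h6
    have h9 : p ^ 2 * p ^ 2 ≤ Z.index := Nat.le_of_mul_le_mul_left h8 (card_pos' Z)
    have h10 : p ^ 4 = p ^ 2 * p ^ 2 := by ring
    omega
  · obtain ⟨x, hxM, hxN⟩ := SetLike.not_le_iff_exists.1 hMN
    set S : Set (Subgroup G) := {B | N ≤ B ∧ B ≤ M ∧ B ≤ centralizer (B : Set G)}
      with hSdef
    have hNab : N ≤ centralizer (N : Set G) := by rw [← hMdef]; exact NleM
    have hNS : N ∈ S := ⟨le_rfl, NleM, hNab⟩
    obtain ⟨B₀, hB₀S, hB₀max⟩ := exists_max_card S ⟨N, hNS⟩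
    obtain ⟨NleB₀, B₀leM, B₀ab⟩ := hB₀S
    have hxC : x ∈ centralizer (N : Set G) := by rw [← hMdef]; exact hxM
    have hWS : N ⊔ zpowers x ∈ S := by
      refine ⟨le_sup_left, sup_le NleM ?_, join_abelian hNab hxC⟩
      · rw [hMdef] at hxM ⊢; exact zpowers_le.2 hxM
    have hNW : N ≠ N ⊔ zpowers x := by
      intro he
      apply hxN
      rw [hMdef] at hxM
      have : x ∈ N := by rw [he]; exact mem_sup_right (mem_zpowers x)
      exact this
    have hcardNB : Nat.card N < Nat.card B₀ :=
      lt_of_lt_of_le (card_lt_of_lt le_sup_left hNW) (hB₀max _ hWS)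
    have hB₀sc : centralizer (B₀ : Set G) = B₀ := by
      have hCle : centralizer (B₀ : Set G) ≤ M := by
        rw [hMdef]
        exact centralizer_le (SetLike.coe_subset_coe.2 NleB₀)
      refine le_antisymm ?_ B₀ab
      intro y hy
      by_contra hyB
      have hW'S : B₀ ⊔ zpowers y ∈ S :=
        ⟨NleB₀.trans le_sup_left, sup_le B₀leM (zpowers_le.2 (hCle hy)),
          join_abelian B₀ab hy⟩
      have hne : B₀ ≠ B₀ ⊔ zpowers y := by
        intro he
        exact hyB (by rw [he]; exact mem_sup_right (mem_zpowers y))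
      exact absurd (hB₀max _ hW'S) (not_le.2 (card_lt_of_lt le_sup_left hne))
    have hB₀A : Nat.card B₀ ≤ Nat.card A := hAmax B₀ hB₀sc
    have he : Nat.card N * N.relIndex B₀ = Nat.card B₀ := card_mul_relIndex NleB₀
    have he1 : 1 < N.relIndex B₀ := by
      rcases Nat.lt_or_ge 1 (N.relIndex B₀) with h | h
      · exact h
      · exfalso
        have h2 : Nat.card B₀ ≤ Nat.card N := by
          rw [← he]
          calc Nat.card N * N.relIndex B₀ ≤ Nat.card N * 1 := Nat.mul_le_mul_left _ h
            _ = Nat.card N := mul_one _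
        omega
    have hedvd : N.relIndex B₀ ∣ Nat.card G := by
      refine dvd_trans ⟨Nat.card N, by rw [← he]; ring⟩ (card_subgroup_dvd_card B₀)
    have hpe : p ≤ N.relIndex B₀ := p_le_of_dvd hpmin hedvd he1
    have ht : Nat.card Z * Z.relIndex N = Nat.card N := card_mul_relIndex ZleN
    have htdvd : Z.relIndex N ∣ Nat.card G := by
      refine dvd_trans ⟨Nat.card Z, by rw [← ht]; ring⟩ (card_subgroup_dvd_card N)
    have hchain : Nat.card Z * (Z.relIndex N * (p * p ^ 2)) ≤ Nat.card Z * Z.index := by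
      calc Nat.card Z * (Z.relIndex N * (p * p ^ 2))
          = (Nat.card Z * Z.relIndex N * p) * p ^ 2 := by ring
        _ ≤ (Nat.card Z * Z.relIndex N * N.relIndex B₀) * p ^ 2 :=
            Nat.mul_le_mul_right _ (Nat.mul_le_mul_left _ hpe)
        _ = Nat.card B₀ * p ^ 2 := by rw [ht, he]
        _ ≤ Nat.card A * p ^ 2 := Nat.mul_le_mul_right _ hB₀A
        _ = Nat.card G := cardA_eq
        _ = Nat.card Z * Z.index := cardG_eq.symm
    have ht3 : Z.relIndex N * (p * p ^ 2) ≤ Z.index :=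
      Nat.le_of_mul_le_mul_left hchain (card_pos' Z)
    have htlt : Z.relIndex N < p := by
      by_contra hcon
      push_neg at hcon
      have h2 : p * (p * p ^ 2) ≤ Z.index :=
        le_trans (Nat.mul_le_mul_right _ hcon) ht3
      have h3 : p ^ 4 = p * (p * p ^ 2) := by ring
      omega
    have ht1 : Z.relIndex N = 1 := by
      have ht0 : Z.relIndex N ≠ 0 := by
        intro h0
        rw [h0, mul_zero] at ht
        have := card_pos' N
        omega
      by_contra hcon
      have h1 : 1 < Z.relIndex N := by omega
      exact absurd (p_le_of_dvd hpmin htdvd h1) (not_le.2 htlt)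
    have hNZcard : Nat.card N ≤ Nat.card Z := by rw [← ht, ht1, mul_one]
    have hZN : Z = N := eq_of_le_of_card_ge ZleN hNZcard
    refine ⟨hZN.symm, fun K' => ?_⟩
    have h9 := hNmax K'
    rwa [← hZN] at h9

lemma keybound {p : ℕ} (hp : p.Prime)
    (hpmin : ∀ q : ℕ, q.Prime → q ∣ Nat.card G → p ≤ q)
    (hmax : ∀ K', cdMeasure G K' ≤ cdMeasure G (center G))
    {H K : Subgroup G}
    (hKC : K ≤ centralizer (H : Set G))
    (hZH : center G ≤ H) (hZK : center G ≤ K)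
    (hHK : H ⊓ K = center G)
    (hnKZ : ¬ K ≤ center G) :
    p ^ 2 * Nat.card H ≤ Nat.card G := by
  set Z := center G with hZdef
  have hcZ : centralizer ((Z : Subgroup G) : Set G) = ⊤ :=
    centralizer_eq_top_iff_subset.2 fun x hx => hx
  obtain ⟨x, hxK, hxZ⟩ := SetLike.not_le_iff_exists.1 hnKZ
  set S : Set (Subgroup G) := {B | Z ≤ B ∧ B ≤ K ∧ B ≤ centralizer (B : Set G)}
    with hSdef
  have hZS : Z ∈ S := ⟨le_rfl, hZK, center_le_centralizer _⟩
  obtain ⟨B₀, hB₀S, hB₀max⟩ := exists_max_card S ⟨Z, hZS⟩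
  obtain ⟨ZleB₀, B₀leK, B₀ab⟩ := hB₀S
  have hxC : x ∈ centralizer ((Z : Subgroup G) : Set G) := by
    rw [hcZ]; exact mem_top x
  have hWS : Z ⊔ zpowers x ∈ S :=
    ⟨le_sup_left, sup_le hZK (zpowers_le.2 hxK),
      join_abelian (center_le_centralizer _) hxC⟩
  have hne : Z ≠ Z ⊔ zpowers x := by
    intro he
    have hx2 : x ∈ Z ⊔ zpowers x := mem_sup_right (mem_zpowers x)
    rw [← he] at hx2
    exact hxZ hx2
  have hcard : Nat.card Z < Nat.card B₀ :=
    lt_of_lt_of_le (card_lt_of_lt le_sup_left hne) (hB₀max _ hWS)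
  have hb : Nat.card Z * Z.relIndex B₀ = Nat.card B₀ := card_mul_relIndex ZleB₀
  have hb1 : 1 < Z.relIndex B₀ := by
    rcases Nat.lt_or_ge 1 (Z.relIndex B₀) with h | h
    · exact h
    · exfalso
      have h2 : Nat.card B₀ ≤ Nat.card Z := by
        rw [← hb]
        calc Nat.card Z * Z.relIndex B₀ ≤ Nat.card Z * 1 := Nat.mul_le_mul_left _ h
          _ = Nat.card Z := mul_one _
      omega
  have hbdvd : Z.relIndex B₀ ∣ Nat.card G :=
    dvd_trans ⟨Nat.card Z, by rw [← hb]; ring⟩ (card_subgroup_dvd_card B₀)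
  have hpb : p ≤ Z.relIndex B₀ := p_le_of_dvd hpmin hbdvd hb1
  have HleCB : H ≤ centralizer (B₀ : Set G) :=
    le_centralizer_iff.2 (B₀leK.trans hKC)
  have hHB₀ : H ⊓ B₀ = Z :=
    le_antisymm (le_trans (inf_le_inf_left H B₀leK) hHK.le) (le_inf hZH ZleB₀)
  have hT : Nat.card (H ⊔ B₀ : Subgroup G) * Nat.card Z = Nat.card H * Nat.card B₀ := by
    have h2 := card_sup_mul_card_inf H B₀ (HleCB.trans (centralizer_le_normalizer' B₀))
    rwa [hHB₀] at h2
  have hsupC : (H ⊔ B₀ : Subgroup G) ≤ centralizer (B₀ : Set G) := sup_le HleCB B₀ab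
  have hmZval : cdMeasure G Z = Nat.card Z * Nat.card G := by
    unfold cdMeasure; rw [hcZ, Subgroup.card_top]
  have hB2 : Nat.card B₀ * Nat.card (H ⊔ B₀ : Subgroup G) ≤ Nat.card Z * Nat.card G := by
    calc Nat.card B₀ * Nat.card (H ⊔ B₀ : Subgroup G)
        ≤ Nat.card B₀ * Nat.card (centralizer (B₀ : Set G)) :=
          Nat.mul_le_mul_left _ (Subgroup.card_le_of_le hsupC)
      _ = cdMeasure G B₀ := rfl
      _ ≤ cdMeasure G Z := hmax B₀
      _ = Nat.card Z * Nat.card G := hmZval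
  have hB3 : Nat.card B₀ * (Nat.card H * Nat.card B₀) ≤
      Nat.card Z * (Nat.card Z * Nat.card G) := by
    calc Nat.card B₀ * (Nat.card H * Nat.card B₀)
        = (Nat.card B₀ * Nat.card (H ⊔ B₀ : Subgroup G)) * Nat.card Z := by
          rw [← hT]; ring
      _ ≤ (Nat.card Z * Nat.card G) * Nat.card Z := Nat.mul_le_mul_right _ hB2
      _ = Nat.card Z * (Nat.card Z * Nat.card G) := by ring
  have final : (Nat.card Z * Nat.card Z) * (Z.relIndex B₀ * Z.relIndex B₀ * Nat.card H)
      ≤ (Nat.card Z * Nat.card Z) * Nat.card G := by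
    calc (Nat.card Z * Nat.card Z) * (Z.relIndex B₀ * Z.relIndex B₀ * Nat.card H)
        = Nat.card B₀ * (Nat.card H * Nat.card B₀) := by rw [← hb]; ring
      _ ≤ Nat.card Z * (Nat.card Z * Nat.card G) := hB3
      _ = (Nat.card Z * Nat.card Z) * Nat.card G := by ring
  have hfin : Z.relIndex B₀ * Z.relIndex B₀ * Nat.card H ≤ Nat.card G :=
    Nat.le_of_mul_le_mul_left final (Nat.mul_pos (card_pos' Z) (card_pos' Z))
  calc p ^ 2 * Nat.card H = p * p * Nat.card H := by ring
    _ ≤ Z.relIndex B₀ * Z.relIndex B₀ * Nat.card H :=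
        Nat.mul_le_mul_right _ (Nat.mul_le_mul hpb hpb)
    _ ≤ Nat.card G := hfin

end CDAux

theorem stmt_4 (G : Type*) [Group G] [Finite G] (p : ℕ) (hp : p.Prime)
    (hpdvd : p ∣ Nat.card G)
    (hpmin : ∀ q : ℕ, q.Prime → q ∣ Nat.card G → p ≤ q)
    (A : Subgroup G) (hA : Subgroup.centralizer (A : Set G) = A)
    (hAmax : ∀ B : Subgroup G, Subgroup.centralizer (B : Set G) = B →
      Nat.card B ≤ Nat.card A)
    (hiA : A.index = p ^ 2)
    (hZ₁ : p ^ 2 < (Subgroup.center G).index)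
    (hZ₂ : (Subgroup.center G).index < p ^ 4) :
    CD G = {Subgroup.center G, ⊤} := by
  classical
  open Subgroup in
  have hcZ : Subgroup.centralizer ((Subgroup.center G : Subgroup G) : Set G) = ⊤ :=
    Subgroup.centralizer_eq_top_iff_subset.2 fun x hx => hx
  have hmZval : cdMeasure G (Subgroup.center G) =
      Nat.card (Subgroup.center G) * Nat.card G := by
    unfold cdMeasure; rw [hcZ, Subgroup.card_top]
  have hmtopval : cdMeasure G ⊤ = Nat.card G * Nat.card (Subgroup.center G) := by
    unfold cdMeasure
    rw [Subgroup.card_top, Subgroup.coe_top, Subgroup.centralizer_univ]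
  haveI : Finite (Subgroup G) :=
    Finite.of_injective (fun H : Subgroup G => (H : Set G)) SetLike.coe_injective
  obtain ⟨H₀, hH₀⟩ := Finite.exists_max (cdMeasure G)
  obtain ⟨_, hZmax⟩ := CDAux.propP hp hpmin hAmax hiA hZ₂ hH₀
  ext H
  simp only [CD, Set.mem_setOf_eq, Set.mem_insert_iff, Set.mem_singleton_iff]
  constructor
  · intro hH
    obtain ⟨hHint, _⟩ := CDAux.propP hp hpmin hAmax hiA hZ₂ hH
    by_cases habH : H ≤ Subgroup.centralizer (H : Set G)
    · left
      rw [← hHint, inf_of_le_left habH]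
    · have ZleH : Subgroup.center G ≤ H := by
        rw [← hHint]; exact inf_le_left
      have ZleK : Subgroup.center G ≤ Subgroup.centralizer (H : Set G) :=
        Subgroup.center_le_centralizer _
      have HleCK : H ≤ Subgroup.centralizer
          ((Subgroup.centralizer (H : Set G) : Subgroup G) : Set G) :=
        Subgroup.le_centralizer_iff.2 le_rfl
      have hKmax : ∀ K', cdMeasure G K' ≤
          cdMeasure G (Subgroup.centralizer (H : Set G)) := by
        intro K'
        refine (hH K').trans ?_
        unfold cdMeasure
        calc Nat.card H * Nat.card (Subgroup.centralizer (H : Set G))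
            = Nat.card (Subgroup.centralizer (H : Set G)) * Nat.card H := mul_comm _ _
          _ ≤ Nat.card (Subgroup.centralizer (H : Set G)) *
              Nat.card (Subgroup.centralizer
                ((Subgroup.centralizer (H : Set G) : Subgroup G) : Set G)) :=
            Nat.mul_le_mul_left _ (Subgroup.card_le_of_le HleCK)
      obtain ⟨hKint, _⟩ := CDAux.propP hp hpmin hAmax hiA hZ₂ hKmax
      by_cases habK : Subgroup.centralizer (H : Set G) ≤
          Subgroup.centralizer ((Subgroup.centralizer (H : Set G) : Subgroup G) : Set G)
      · right
        have hKZ : Subgroup.centralizer (H : Set G) = Subgroup.center G := by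
          rw [← hKint, inf_of_le_left habK]
        have h1 : cdMeasure G (Subgroup.center G) ≤ cdMeasure G H := hH _
        have h2 : cdMeasure G H = Nat.card H * Nat.card (Subgroup.center G) := by
          unfold cdMeasure; rw [hKZ]
        rw [h2, hmZval] at h1
        have h1' : Nat.card (Subgroup.center G) * Nat.card G ≤
            Nat.card (Subgroup.center G) * Nat.card H := by
          rw [mul_comm (Nat.card H)] at h1
          exact h1
        have h3 : Nat.card G ≤ Nat.card H :=
          Nat.le_of_mul_le_mul_left h1' (CDAux.card_pos' _)
        exact Subgroup.eq_top_of_le_card H h3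
      · exfalso
        have hnKZ : ¬ Subgroup.centralizer (H : Set G) ≤ Subgroup.center G :=
          fun h => habK (h.trans (Subgroup.center_le_centralizer _))
        have hnHZ : ¬ H ≤ Subgroup.center G :=
          fun h => habH (h.trans (Subgroup.center_le_centralizer _))
        have hKH : Subgroup.centralizer (H : Set G) ⊓ H = Subgroup.center G := by
          rw [inf_comm]; exact hHint
        have b1 : p ^ 2 * Nat.card H ≤ Nat.card G :=
          CDAux.keybound hp hpmin hZmax le_rfl ZleH ZleK hHint hnKZ
        have b2 : p ^ 2 * Nat.card (Subgroup.centralizer (H : Set G)) ≤ Nat.card G :=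
          CDAux.keybound hp hpmin hZmax HleCK ZleK ZleH hKH hnHZ
        have hHeq : Nat.card H * Nat.card (Subgroup.centralizer (H : Set G)) =
            Nat.card (Subgroup.center G) * Nat.card G := by
          have h3 : cdMeasure G H = cdMeasure G (Subgroup.center G) :=
            le_antisymm (hZmax H) (hH _)
          calc Nat.card H * Nat.card (Subgroup.centralizer (H : Set G))
              = cdMeasure G H := rfl
            _ = cdMeasure G (Subgroup.center G) := h3
            _ = Nat.card (Subgroup.center G) * Nat.card G := hmZval
        have hfin : p ^ 4 * (Nat.card (Subgroup.center G) * Nat.card G) ≤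
            Nat.card G * Nat.card G := by
          calc p ^ 4 * (Nat.card (Subgroup.center G) * Nat.card G)
              = (p ^ 2 * Nat.card H) *
                (p ^ 2 * Nat.card (Subgroup.centralizer (H : Set G))) := by
                rw [← hHeq]; ring
            _ ≤ Nat.card G * Nat.card G := Nat.mul_le_mul b1 b2
        have hGZ : Nat.card (Subgroup.center G) * (Subgroup.center G).index =
            Nat.card G := Subgroup.card_mul_index _
        have h5 : p ^ 4 * Nat.card (Subgroup.center G) ≤ Nat.card G := by
          have h6 : Nat.card G * (p ^ 4 * Nat.card (Subgroup.center G)) ≤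
              Nat.card G * Nat.card G := by
            calc Nat.card G * (p ^ 4 * Nat.card (Subgroup.center G))
                = p ^ 4 * (Nat.card (Subgroup.center G) * Nat.card G) := by ring
              _ ≤ Nat.card G * Nat.card G := hfin
          exact Nat.le_of_mul_le_mul_left h6 Nat.card_pos
        have h7 : Nat.card (Subgroup.center G) * p ^ 4 ≤
            Nat.card (Subgroup.center G) * (Subgroup.center G).index := by
          rw [hGZ]
          calc Nat.card (Subgroup.center G) * p ^ 4
              = p ^ 4 * Nat.card (Subgroup.center G) := mul_comm _ _
            _ ≤ Nat.card G := h5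
        have h8 : p ^ 4 ≤ (Subgroup.center G).index :=
          Nat.le_of_mul_le_mul_left h7 (CDAux.card_pos' _)
        omega
  · intro h
    rcases h with h | h
    · subst h; exact hZmax
    · subst h
      intro K
      calc cdMeasure G K ≤ cdMeasure G (Subgroup.center G) := hZmax K
        _ = cdMeasure G ⊤ := by rw [hmZval, hmtopval, mul_comm]
end

section
/- Let G be a finite group, p a prime, and let A be a subgroup of maximum order among the self-centralizing subgroups of G. Suppose |G : A| = p^2 and |G : Z(G)| = p^i with i > 4. If G possesses a subgroup T with |G : T| = p and |G : Z(T)| = p^3, then T is unique; that is, any subgroup T' of G with |G : T'| = p and |G : Z(T')| = p^3 satisfies T' = T. -/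
set_option linter.unusedSectionVars false

/-- The center of a subgroup `T` of `G`, regarded as a subgroup of `G`. -/
def centerIn {G : Type*} [Group G] (T : Subgroup G) : Subgroup G :=
  (Subgroup.center T).map T.subtype

section Aux

variable {G : Type*} [Group G] [Finite G]

lemma myCardInf (H K : Subgroup G) :
    Nat.card ↥(H ⊓ K) * H.relIndex K = Nat.card K := by
  have h1 : Nat.card ↥((H ⊓ K).subgroupOf K) = Nat.card ↥(H ⊓ K) :=
    Nat.card_congr ((H ⊓ K).subgroupOfEquivOfLe inf_le_right).toEquiv
  have h2 := Subgroup.card_mul_index ((H ⊓ K).subgroupOf K)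
  rw [h1] at h2
  rw [Subgroup.relIndex, ← Subgroup.inf_subgroupOf_right]
  exact h2

lemma myEqOfLe {H K : Subgroup G} (h : H ≤ K) (hc : Nat.card K ≤ Nat.card H) : H = K := by
  have h0 := myCardInf H K
  rw [inf_eq_left.2 h] at h0
  have hpos : 0 < Nat.card H := Nat.card_pos
  have hne : H.relIndex K ≠ 0 := by
    intro hz; rw [hz, mul_zero] at h0; exact (Nat.card_pos (α := ↥K)).ne' h0.symm
  have : H.relIndex K = 1 := by nlinarith [Nat.one_le_iff_ne_zero.2 hne]
  exact le_antisymm h (Subgroup.relIndex_eq_one.1 this)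

lemma mySupCard (H K : Subgroup G) :
    Nat.card H * Nat.card K ≤ Nat.card ↥(H ⊔ K) * Nat.card ↥(H ⊓ K) := by
  have h1 := myCardInf H K
  have h2 := myCardInf H (H ⊔ K)
  rw [inf_eq_left.2 le_sup_left] at h2
  have hne2 : H.relIndex (H ⊔ K) ≠ 0 := by
    have h2' := h2
    intro hz
    rw [hz, mul_zero] at h2'
    exact (Nat.card_pos (α := ↥(H ⊔ K))).ne' h2'.symm
  have h3 : H.relIndex K ≤ H.relIndex (H ⊔ K) :=
    Subgroup.relIndex_le_of_le_right le_sup_right hne2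
  calc Nat.card H * Nat.card K = Nat.card H * (Nat.card ↥(H ⊓ K) * H.relIndex K) := by rw [h1]
    _ ≤ Nat.card H * (Nat.card ↥(H ⊓ K) * H.relIndex (H ⊔ K)) := by
        exact Nat.mul_le_mul_left _ (Nat.mul_le_mul_left _ h3)
    _ = (Nat.card H * H.relIndex (H ⊔ K)) * Nat.card ↥(H ⊓ K) := by ring
    _ = Nat.card ↥(H ⊔ K) * Nat.card ↥(H ⊓ K) := by rw [h2]

lemma mySupTop {p : ℕ} (hp : p.Prime) {H K : Subgroup G} (hiH : H.index = p)
    (hK : ¬ K ≤ H) : H ⊔ K = ⊤ := by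
  have hd : (H ⊔ K).index ∣ p := hiH ▸ Subgroup.index_dvd_of_le le_sup_left
  rcases (Nat.Prime.eq_one_or_self_of_dvd hp _ hd) with h1 | h1
  · exact Subgroup.index_eq_one.1 h1
  · exfalso
    have c1 := Subgroup.card_mul_index H
    have c2 := Subgroup.card_mul_index (H ⊔ K)
    rw [hiH] at c1; rw [h1] at c2
    have : Nat.card ↥(H ⊔ K) ≤ Nat.card H := Nat.le_of_mul_le_mul_right (by omega) hp.pos
    exact hK (le_sup_right.trans (myEqOfLe le_sup_left this).symm.le)

lemma centerIn_le (T : Subgroup G) : centerIn T ≤ T := Subgroup.map_subtype_le _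

lemma centerIn_comm {T : Subgroup G} {x t : G} (hx : x ∈ centerIn T) (ht : t ∈ T) :
    t * x = x * t := by
  obtain ⟨y, hy, rfl⟩ := hx
  have := (Subgroup.mem_center_iff.1 hy) ⟨t, ht⟩
  exact congrArg Subtype.val this

end Aux

theorem stmt_9 (G : Type*) [Group G] [Finite G] (p : ℕ) (hp : p.Prime)
    (A : Subgroup G) (hA : Subgroup.centralizer (A : Set G) = A)
    (hAmax : ∀ B : Subgroup G, Subgroup.centralizer (B : Set G) = B →
      Nat.card B ≤ Nat.card A)
    (hiA : A.index = p ^ 2) (i : ℕ) (hi : 4 < i)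
    (hZ : (Subgroup.center G).index = p ^ i)
    (T : Subgroup G) (hiT : T.index = p) (hZT : (centerIn T).index = p ^ 3) :
    ∀ T' : Subgroup G, T'.index = p → (centerIn T').index = p ^ 3 → T' = T := by
  intro T' hiT' hZT'
  by_contra hne
  set Z := centerIn T with hZdef
  set Z' := centerIn T' with hZ'def
  -- T' is not contained in T and vice versa
  have hcards : Nat.card T' = Nat.card T := by
    have c1 := Subgroup.card_mul_index T
    have c2 := Subgroup.card_mul_index T'
    rw [hiT] at c1; rw [hiT'] at c2
    exact Nat.eq_of_mul_eq_mul_right hp.pos (by omega)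
  have hT'nleT : ¬ T' ≤ T := fun h => hne (myEqOfLe h hcards.symm.le)
  have hTnleT' : ¬ T ≤ T' := fun h => hne (myEqOfLe h hcards.le).symm
  -- a subgroup whose elements commute with everything is inside the center;
  -- key tool: if x commutes with two subgroups whose sup is ⊤, then x is central
  have hcent : ∀ (H K : Subgroup G), H ⊔ K = ⊤ → ∀ x : G,
      (∀ h ∈ H, h * x = x * h) → (∀ k ∈ K, k * x = x * k) →
      x ∈ Subgroup.center G := by
    intro H K htop x hH hK
    rw [Subgroup.mem_center_iff]
    intro g
    have hg : g ∈ H ⊔ K := htop.symm ▸ Subgroup.mem_top g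
    have : H ⊔ K ≤ Subgroup.centralizer {x} := by
      apply sup_le
      · intro h hh
        rw [Subgroup.mem_centralizer_iff]
        intro y hy
        rw [Set.mem_singleton_iff] at hy
        subst hy
        exact (hH h hh).symm
      · intro k hk
        rw [Subgroup.mem_centralizer_iff]
        intro y hy
        rw [Set.mem_singleton_iff] at hy
        subst hy
        exact (hK k hk).symm
    have := this hg
    rw [Subgroup.mem_centralizer_iff] at this
    exact (this x rfl).symm
  -- central subgroups force small index contradiction
  have hindex_contr : ∀ (W : Subgroup G) (k : ℕ), W ≤ Subgroup.center G →
      W.index ≤ p ^ k → k ≤ 4 → False := by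
    intro W k hW hWk hk4
    have hdvd : (Subgroup.center G).index ∣ W.index := Subgroup.index_dvd_of_le hW
    rw [hZ] at hdvd
    have hpos : 0 < W.index := Nat.pos_of_ne_zero Subgroup.index_ne_zero_of_finite
    have h1 : p ^ i ≤ W.index := Nat.le_of_dvd hpos hdvd
    have h2 : p ^ i ≤ p ^ 4 := le_trans h1 (le_trans hWk (Nat.pow_le_pow_right hp.pos hk4))
    have := (Nat.pow_le_pow_iff_right hp.one_lt).1 h2
    omega
  by_cases hZle : Z ≤ T'
  · by_cases hZ'le : Z' ≤ T
    · -- case (a): Z ≤ T', Z' ≤ T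
      have htop : T ⊔ T' = ⊤ := mySupTop hp hiT hT'nleT
      have hZZ' : Z ⊓ Z' ≤ Subgroup.center G := by
        intro x hx
        exact hcent T T' htop x
          (fun h hh => centerIn_comm hx.1 hh)
          (fun k hk => centerIn_comm hx.2 hk)
      -- cardinalities
      have cZ : Nat.card Z * p ^ 3 = Nat.card G := by
        have := Subgroup.card_mul_index Z; rwa [hZT] at this
      have cZ' : Nat.card Z' * p ^ 3 = Nat.card G := by
        have := Subgroup.card_mul_index Z'; rwa [hZT'] at this
      have cC : Nat.card (Subgroup.center G) * p ^ i = Nat.card G := by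
        have := Subgroup.card_mul_index (Subgroup.center G); rwa [hZ] at this
      have cT : Nat.card T * p = Nat.card G := by
        have := Subgroup.card_mul_index T; rwa [hiT] at this
      have hsup := mySupCard Z Z'
      have hinfle : Nat.card ↥(Z ⊓ Z') ≤ Nat.card (Subgroup.center G) :=
        Subgroup.card_le_of_le hZZ'
      have hsupleT : Z ⊔ Z' ≤ T := sup_le (centerIn_le T) hZ'le
      have hsle : Nat.card ↥(Z ⊔ Z') ≤ Nat.card T := Subgroup.card_le_of_le hsupleT
      -- derive Nat.card T ≤ Nat.card (Z ⊔ Z')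
      have key : Nat.card T ≤ Nat.card ↥(Z ⊔ Z') := by
        set s := Nat.card ↥(Z ⊔ Z')
        set m := Nat.card (Subgroup.center G)
        set n := Nat.card G with hndef
        have hn : 0 < n := Nat.card_pos
        have h1 : n * n ≤ s * m * p ^ 6 := by
          have hzz : (Nat.card Z * p ^ 3) * (Nat.card Z' * p ^ 3) = n * n := by rw [cZ, cZ']
          calc n * n = (Nat.card Z * Nat.card Z') * p ^ 6 := by rw [← hzz]; ring
            _ ≤ (s * Nat.card ↥(Z ⊓ Z')) * p ^ 6 := Nat.mul_le_mul_right _ hsup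
            _ ≤ s * m * p ^ 6 := Nat.mul_le_mul_right _ (Nat.mul_le_mul_left _ hinfle)
        have h2 : n * n * p ^ i ≤ s * n * p ^ 6 := by
          calc n * n * p ^ i ≤ s * m * p ^ 6 * p ^ i := Nat.mul_le_mul_right _ h1
            _ = s * (m * p ^ i) * p ^ 6 := by ring
            _ = s * n * p ^ 6 := by rw [cC]
        have h3 : n * p ^ i ≤ s * p ^ 6 := by
          refine Nat.le_of_mul_le_mul_left ?_ hn
          calc n * (n * p ^ i) = n * n * p ^ i := by ring
            _ ≤ s * n * p ^ 6 := h2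
            _ = n * (s * p ^ 6) := by ring
        have h4 : n * p ^ 5 ≤ s * p ^ 6 :=
          le_trans (Nat.mul_le_mul_left n (Nat.pow_le_pow_right hp.pos (by omega))) h3
        have h5 : n ≤ s * p := by
          refine Nat.le_of_mul_le_mul_right ?_ (pow_pos hp.pos 5)
          calc n * p ^ 5 ≤ s * p ^ 6 := h4
            _ = s * p * p ^ 5 := by ring
        refine Nat.le_of_mul_le_mul_right ?_ hp.pos
        calc Nat.card T * p = n := cT
          _ ≤ s * p := h5
      have hTeq : Z ⊔ Z' = T := myEqOfLe hsupleT key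
      refine hTnleT' ?_
      rw [← hTeq]
      exact sup_le hZle (centerIn_le T')
    · -- case (c): Z ≤ T', Z' not ≤ T
      have htop : T ⊔ Z' = ⊤ := mySupTop hp hiT hZ'le
      have hcentral : Z ≤ Subgroup.center G := by
        intro x hx
        exact hcent T Z' htop x
          (fun h hh => centerIn_comm hx hh)
          (fun k hk => (centerIn_comm hk (hZle hx)).symm)
      exact hindex_contr Z 3 hcentral (le_of_eq hZT) (by omega)
  · by_cases hZ'le : Z' ≤ T
    · -- case (b): Z not ≤ T', Z' ≤ T
      have htop : T' ⊔ Z = ⊤ := mySupTop hp hiT' hZle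
      have hcentral : Z' ≤ Subgroup.center G := by
        intro x hx
        exact hcent T' Z htop x
          (fun h hh => centerIn_comm hx hh)
          (fun k hk => (centerIn_comm hk (hZ'le hx)).symm)
      exact hindex_contr Z' 3 hcentral (le_of_eq hZT') (by omega)
    · -- case (d): neither
      have htop : T' ⊔ Z = ⊤ := mySupTop hp hiT' hZle
      have hcentral : Z' ⊓ T ≤ Subgroup.center G := by
        intro x hx
        exact hcent T' Z htop x
          (fun h hh => centerIn_comm hx.1 hh)
          (fun k hk => (centerIn_comm hk hx.2).symm)
      apply hindex_contr (Z' ⊓ T) 4 hcentral _ le_rfl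
      have := Subgroup.index_inf_le (H := Z') (K := T)
      rw [hZT', hiT] at this
      calc (Z' ⊓ T).index ≤ p ^ 3 * p := this
        _ = p ^ 4 := by ring
end
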